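/- arXiv:1402.2801 — 2 statements merged into one kernel-verified Lean document; each statement's English description precedes it below -/
import Mathlib

section
/- Let M¹,…,M^k be families of probability distributions indexed by inputs D ∈ T^n such that each M^i is (ε_i, γ_i)-differentially private with ε_i ≤ ε' for all i. Then for any γ ∈ (0,1], the composed mechanism M_D = (M¹_D, …, M^k_D) (an independent tuple of samples from the k mechanisms on the same input) is (ε, γ + Σ_{i=1}^k γ_i)-differentially private for ε = √(2·log(1/γ)·k)·ε' + k·ε'·(e^{ε'} − 1). -/
set_option maxHeartbeats 4000000

open MeasureTheory
open scoped BigOperators ENNReal NNReal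

namespace AdvCompProof
open Real

lemma aux_main (p : ℝ) (hp0 : 0 ≤ p) (hp1 : p ≤ 1) (h : ℝ) (hh : 0 ≤ h) :
    Real.log (1 - p + p * Real.exp h) ≤ h ^ 2 / 8 + p * h := by
  set N : ℝ → ℝ := fun x => 1 - p + p * Real.exp x with hN
  have hNpos : ∀ x, 0 < N x := by
    intro x
    show 0 < 1 - p + p * Real.exp x
    rcases eq_or_lt_of_le hp0 with h0 | h0
    · simp [← h0]
    · have h1 := Real.exp_pos x
      have h2 : 0 < p * Real.exp x := by positivity
      nlinarith
  set D : ℝ → ℝ := fun x => x / 4 + p - p * Real.exp x / N x with hD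
  set g : ℝ → ℝ := fun x => x ^ 2 / 8 + p * x - Real.log (N x) with hg
  have hNd : ∀ x, HasDerivAt N (p * Real.exp x) x := by
    intro x
    exact ((Real.hasDerivAt_exp x).const_mul p).const_add (1 - p)
  have hgd : ∀ x, HasDerivAt g (D x) x := by
    intro x
    have h1 : HasDerivAt (fun x : ℝ => x ^ 2 / 8) (x / 4) x := by
      have := (hasDerivAt_pow 2 x).div_const 8
      exact this.congr_deriv (by norm_num; ring)
    have h2 : HasDerivAt (fun x : ℝ => p * x) p x := by
      simpa using (hasDerivAt_id x).const_mul p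
    have h3 : HasDerivAt (fun x => Real.log (N x)) (p * Real.exp x / N x) x :=
      (hNd x).log (hNpos x).ne'
    exact (h1.add h2).sub h3
  have hDd : ∀ x, HasDerivAt D
      (1 / 4 - (p * Real.exp x * N x - p * Real.exp x * (p * Real.exp x)) / (N x) ^ 2) x := by
    intro x
    have h1 : HasDerivAt (fun x : ℝ => x / 4 + p) (1 / 4) x := by
      simpa using (hasDerivAt_id x).div_const 4 |>.add_const p
    have h2 : HasDerivAt (fun x => p * Real.exp x / N x)
        ((p * Real.exp x * N x - p * Real.exp x * (p * Real.exp x)) / (N x) ^ 2) x :=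
      ((Real.hasDerivAt_exp x).const_mul p).div (hNd x) (hNpos x).ne'
    exact h1.sub h2
  have hDd_nonneg : ∀ x, 0 ≤ 1 / 4 -
      (p * Real.exp x * N x - p * Real.exp x * (p * Real.exp x)) / (N x) ^ 2 := by
    intro x
    set A := 1 - p with hA
    set B := p * Real.exp x with hB
    have hNx : N x = A + B := rfl
    have hABpos : 0 < A + B := hNx ▸ hNpos x
    have hA0 : 0 ≤ A := by simp [hA]; linarith
    have hB0 : 0 ≤ B := by have := (Real.exp_pos x).le; positivity
    have key : (B * (A + B) - B * B) / (A + B) ^ 2 ≤ 1 / 4 := by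
      rw [div_le_iff₀ (by positivity)]
      nlinarith [sq_nonneg (A - B)]
    rw [hNx]
    have : p * Real.exp x * (A + B) - p * Real.exp x * (p * Real.exp x)
        = B * (A + B) - B * B := by rw [hB]
    rw [this]
    linarith
  have hDmono : Monotone D := by
    apply monotone_of_deriv_nonneg
    · exact fun x => (hDd x).differentiableAt
    · intro x
      rw [(hDd x).deriv]
      exact hDd_nonneg x
  have hD0 : D 0 = 0 := by
    have : N 0 = 1 := by simp [hN]
    simp [hD, this]
  have hDnonneg : ∀ x, 0 ≤ x → 0 ≤ D x := fun x hx => hD0 ▸ hDmono hx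
  have hgmono : MonotoneOn g (Set.Ici 0) := by
    apply monotoneOn_of_deriv_nonneg (convex_Ici 0)
    · exact (fun x _ => (hgd x).differentiableAt.continuousAt.continuousWithinAt)
    · exact fun x _ => (hgd x).differentiableAt.differentiableWithinAt
    · intro x hx
      rw [(hgd x).deriv]
      rw [interior_Ici] at hx
      exact hDnonneg x hx.le
  have hg0 : g 0 = 0 := by simp [hg, hN]
  have : g 0 ≤ g h := hgmono (by simp) hh hh
  rw [hg0] at this
  have hlog : Real.log (N h) ≤ h ^ 2 / 8 + p * h := by
    simp only [hg] at this; linarith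
  exact hlog


lemma aux_ineq (p : ℝ) (hp0 : 0 ≤ p) (hp1 : p ≤ 1) (h : ℝ) :
    (1 - p) * Real.exp (-(p * h)) + p * Real.exp ((1 - p) * h) ≤ Real.exp (h ^ 2 / 8) := by
  have key : ∀ q : ℝ, 0 ≤ q → q ≤ 1 → ∀ z : ℝ, 0 ≤ z →
      (1 - q) * Real.exp (-(q * z)) + q * Real.exp ((1 - q) * z) ≤ Real.exp (z ^ 2 / 8) := by
    intro q hq0 hq1 z hz
    have hN : 0 < 1 - q + q * Real.exp z := by
      rcases eq_or_lt_of_le hq0 with h0 | h0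
      · simp [← h0]
      · nlinarith [Real.exp_pos z]
    have := aux_main q hq0 hq1 z hz
    have hle : 1 - q + q * Real.exp z ≤ Real.exp (z ^ 2 / 8 + q * z) :=
      (Real.log_le_iff_le_exp hN).mp this
    have : Real.exp (-(q * z)) * (1 - q + q * Real.exp z)
        ≤ Real.exp (-(q * z)) * Real.exp (z ^ 2 / 8 + q * z) :=
      mul_le_mul_of_nonneg_left hle (Real.exp_nonneg _)
    calc (1 - q) * Real.exp (-(q * z)) + q * Real.exp ((1 - q) * z)
        = Real.exp (-(q * z)) * (1 - q + q * Real.exp z) := by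
          have hsplit : Real.exp ((1 - q) * z) = Real.exp (-(q * z)) * Real.exp z := by
            rw [← Real.exp_add]; ring_nf
          rw [hsplit]; ring
      _ ≤ Real.exp (-(q * z)) * Real.exp (z ^ 2 / 8 + q * z) := this
      _ = Real.exp (z ^ 2 / 8) := by rw [← Real.exp_add]; ring_nf
  rcases le_or_gt 0 h with hh | hh
  · exact key p hp0 hp1 h hh
  · have := key (1 - p) (by linarith) (by linarith) (-h) (by linarith)
    have e1 : -((1 - p) * -h) = (1 - p) * h := by ring
    have e2 : (1 - (1 - p)) * -h = -(p * h) := by ring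
    have e3 : (-h) ^ 2 = h ^ 2 := by ring
    rw [e1, e2, e3] at this
    have e4 : (1 - (1 - p)) = p := by ring
    rw [e4] at this
    linarith

lemma hoeffding_lemma {Ω : Type*} [MeasurableSpace Ω] (μ : Measure Ω) [IsProbabilityMeasure μ]
    {X : Ω → ℝ} (hX : Measurable X) {a b : ℝ} (hab : ∀ ω, X ω ∈ Set.Icc a b)
    (h0 : ∫ ω, X ω ∂μ = 0) (s : ℝ) :
    ∫ ω, Real.exp (s * X ω) ∂μ ≤ Real.exp (s ^ 2 * (b - a) ^ 2 / 8) := by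
  have hXb : ∀ ω, |X ω| ≤ max |a| |b| := by
    intro ω
    obtain ⟨h1, h2⟩ := hab ω
    rcases abs_cases (X ω) with ⟨he, _⟩ | ⟨he, _⟩
    · rw [he]; exact le_max_of_le_right (h2.trans (le_abs_self b))
    · rw [he]
      exact le_max_of_le_left ((neg_le_neg h1).trans (neg_le_abs a))
  have hXint : Integrable X μ := by
    refine (integrable_const (max |a| |b|)).mono' hX.aestronglyMeasurable (ae_of_all _ ?_)
    intro ω
    rw [Real.norm_eq_abs]
    exact hXb ω
  have ha0 : a ≤ 0 := by
    have : a = ∫ _ω, a ∂μ := by simp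
    rw [← h0, this]
    exact integral_mono (integrable_const a) hXint (fun ω => (hab ω).1)
  have hb0 : 0 ≤ b := by
    have : b = ∫ _ω, b ∂μ := by simp
    rw [← h0, this]
    exact integral_mono hXint (integrable_const b) (fun ω => (hab ω).2)
  rcases le_or_gt b a with hba | hlt
  · -- a = b = 0, X ≡ 0
    have hab0 : a = 0 ∧ b = 0 := ⟨le_antisymm ha0 (hba.trans' hb0), le_antisymm (hba.trans ha0) hb0⟩
    have hX0 : ∀ ω, X ω = 0 := by
      intro ω; obtain ⟨h1, h2⟩ := hab ω
      rw [hab0.1] at h1; rw [hab0.2] at h2; linarith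
    simp only [hX0, mul_zero, Real.exp_zero]
    simp only [integral_const, probReal_univ, ENNReal.toReal_one, one_smul]
    exact Real.one_le_exp (by positivity)
  · have hne : b - a ≠ 0 := by linarith
    set p : ℝ := -a / (b - a) with hp
    have hp0 : 0 ≤ p := by apply div_nonneg <;> linarith
    have hp1 : p ≤ 1 := by rw [div_le_one (by linarith)]; linarith
    -- pointwise chord bound
    have chord : ∀ ω, Real.exp (s * X ω) ≤
        ((b - X ω) / (b - a)) * Real.exp (s * a) + ((X ω - a) / (b - a)) * Real.exp (s * b) := by
      intro ω
      obtain ⟨h1, h2⟩ := hab ω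
      have hl : 0 ≤ (b - X ω) / (b - a) := by apply div_nonneg <;> linarith
      have hm : 0 ≤ (X ω - a) / (b - a) := by apply div_nonneg <;> linarith
      have hsum : (b - X ω) / (b - a) + (X ω - a) / (b - a) = 1 := by
        field_simp
        ring
      have := convexOn_exp.2 (Set.mem_univ (s * a)) (Set.mem_univ (s * b)) hl hm hsum
      simp only [smul_eq_mul] at this
      have harg : (b - X ω) / (b - a) * (s * a) + (X ω - a) / (b - a) * (s * b) = s * X ω := by
        field_simp; try ring
      rw [harg] at this
      exact this
    -- integrate
    have hrhs_int : Integrable (fun ω =>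
        ((b - X ω) / (b - a)) * Real.exp (s * a) + ((X ω - a) / (b - a)) * Real.exp (s * b)) μ := by
      apply Integrable.add
      · exact ((((integrable_const b).sub hXint).div_const (b - a)).mul_const _)
      · exact (((hXint.sub (integrable_const a)).div_const (b - a)).mul_const _)
    have hlhs_int : Integrable (fun ω => Real.exp (s * X ω)) μ := by
      refine (integrable_const (Real.exp (|s| * max |a| |b|))).mono'
        ((Real.measurable_exp.comp (hX.const_mul s)).aestronglyMeasurable) (ae_of_all _ ?_)
      intro ω
      rw [Real.norm_eq_abs, Real.abs_exp, Real.exp_le_exp]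
      calc s * X ω ≤ |s * X ω| := le_abs_self _
        _ = |s| * |X ω| := abs_mul s (X ω)
        _ ≤ |s| * max |a| |b| := by
            apply mul_le_mul_of_nonneg_left (hXb ω) (abs_nonneg s)
    have step1 : ∫ ω, Real.exp (s * X ω) ∂μ ≤
        (b * Real.exp (s * a) - a * Real.exp (s * b)) / (b - a) := by
      have := integral_mono hlhs_int hrhs_int chord
      refine this.trans (le_of_eq ?_)
      have expand : ∀ ω, ((b - X ω) / (b - a)) * Real.exp (s * a) + ((X ω - a) / (b - a)) * Real.exp (s * b)
          = (b * Real.exp (s * a) - a * Real.exp (s * b)) / (b - a)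
            + ((Real.exp (s * b) - Real.exp (s * a)) / (b - a)) * X ω := by
        intro ω; field_simp; try ring
      rw [integral_congr_ae (ae_of_all _ expand)]
      rw [integral_add (integrable_const _) (hXint.const_mul _), integral_const_mul, h0,
        mul_zero, add_zero, integral_const]
      simp
    refine step1.trans ?_
    have := aux_ineq p hp0 hp1 (s * (b - a))
    have e1 : 1 - p = b / (b - a) := by rw [hp]; field_simp; try ring
    have e2 : -(p * (s * (b - a))) = s * a := by rw [hp]; field_simp; try ring
    have e3 : (1 - p) * (s * (b - a)) = s * b := by rw [e1]; field_simp; try ring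
    have e4 : (s * (b - a)) ^ 2 / 8 = s ^ 2 * (b - a) ^ 2 / 8 := by ring
    rw [e2, e3, e4, e1] at this
    calc (b * Real.exp (s * a) - a * Real.exp (s * b)) / (b - a)
        = b / (b - a) * Real.exp (s * a) + p * Real.exp (s * b) := by
          rw [hp]; field_simp; try ring
      _ ≤ Real.exp (s ^ 2 * (b - a) ^ 2 / 8) := this


lemma prob_eq_of_subsingleton {X : Type*} [MeasurableSpace X] [Subsingleton X]
    (μ ν : Measure X) [IsProbabilityMeasure μ] [IsProbabilityMeasure ν] : μ = ν := by
  ext E hE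
  rcases Set.eq_empty_or_nonempty E with h | h
  · simp [h]
  · have : E = Set.univ := by
      obtain ⟨x, hx⟩ := h
      ext y
      simp only [Set.mem_univ, iff_true]
      rwa [Subsingleton.elim y x]
    rw [this]
    simp

lemma withDensity_prod {α β : Type*} [MeasurableSpace α] [MeasurableSpace β]
    (μ : Measure α) (ν : Measure β) [IsFiniteMeasure μ] [IsFiniteMeasure ν]
    {f : α → ℝ≥0∞} {g : β → ℝ≥0∞} (hf : Measurable f) (hg : Measurable g)
    (hff : IsFiniteMeasure (μ.withDensity f)) (hgf : IsFiniteMeasure (ν.withDensity g)) :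
    (μ.withDensity f).prod (ν.withDensity g)
      = (μ.prod ν).withDensity (fun z => f z.1 * g z.2) := by
  haveI := hff; haveI := hgf
  refine Measure.prod_eq fun s t hs ht => ?_
  rw [withDensity_apply _ (hs.prod ht), ← Measure.prod_restrict s t,
    lintegral_prod_mul hf.aemeasurable hg.aemeasurable,
    withDensity_apply _ hs, withDensity_apply _ ht]

lemma map_withDensity_equiv {α β : Type*} [MeasurableSpace α] [MeasurableSpace β]
    (e : α ≃ᵐ β) (μ : Measure α) {f : β → ℝ≥0∞} (hf : Measurable f) :
    Measure.map e (μ.withDensity (fun x => f (e x))) = (Measure.map e μ).withDensity f := by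
  ext E hE
  rw [Measure.map_apply e.measurable hE, withDensity_apply _ (e.measurable hE),
    withDensity_apply _ hE, setLIntegral_map hE hf e.measurable]

lemma pi_withDensity {k : ℕ} {O : Fin k → Type*} [∀ i, MeasurableSpace (O i)]
    (ν : ∀ i, Measure (O i)) [∀ i, IsProbabilityMeasure (ν i)]
    (f : ∀ i, O i → ℝ≥0∞) (hf : ∀ i, Measurable (f i))
    (hfin : ∀ i, IsProbabilityMeasure ((ν i).withDensity (f i))) :
    Measure.pi (fun i => (ν i).withDensity (f i))
      = (Measure.pi ν).withDensity (fun x => ∏ i, f i (x i)) := by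
  induction k with
  | zero =>
    haveI : ∀ i, IsProbabilityMeasure ((ν i).withDensity (f i)) := hfin
    have h1 : (fun x : (∀ i : Fin 0, O i) => ∏ i, f i (x i)) = fun _ => 1 := by
      funext x; simp
    rw [h1, show ((fun _ => (1:ℝ≥0∞)) : (∀ i : Fin 0, O i) → ℝ≥0∞) = 1 from rfl,
      withDensity_one]
    exact prob_eq_of_subsingleton _ _
  | succ n ih =>
    haveI : ∀ i, IsProbabilityMeasure ((ν i).withDensity (f i)) := hfin
    set e := MeasurableEquiv.piFinSuccAbove O 0 with he
    have h0 := measurePreserving_piFinSuccAbove (fun i => (ν i).withDensity (f i)) 0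
    have h1 := measurePreserving_piFinSuccAbove ν 0
    have hpi : Measure.pi (fun i => (ν i).withDensity (f i))
        = Measure.map e.symm (((ν 0).withDensity (f 0)).prod
            (Measure.pi fun j => (ν (Fin.succAbove 0 j)).withDensity (f (Fin.succAbove 0 j)))) := by
      rw [← h0.map_eq, MeasurableEquiv.map_symm_map]
    have htail : Measure.pi (fun j => (ν (Fin.succAbove 0 j)).withDensity (f (Fin.succAbove 0 j)))
        = (Measure.pi fun j => ν (Fin.succAbove 0 j)).withDensity
            (fun y => ∏ j, f (Fin.succAbove 0 j) (y j)) :=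
      ih _ _ (fun j => hf _) (fun j => hfin _)
    have hgm : Measurable (fun y : ∀ j, O (Fin.succAbove 0 j) =>
        ∏ j, f (Fin.succAbove 0 j) (y j)) :=
      Finset.measurable_prod _ (fun j _ => (hf _).comp (measurable_pi_apply j))
    have hFm : Measurable (fun x : ∀ i, O i => ∏ i, f i (x i)) :=
      Finset.measurable_prod _ (fun i _ => (hf i).comp (measurable_pi_apply i))
    have hfin2 : IsProbabilityMeasure ((Measure.pi fun j => ν (Fin.succAbove 0 j)).withDensity
        (fun y => ∏ j, f (Fin.succAbove 0 j) (y j))) := by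
      rw [← htail]
      infer_instance
    rw [hpi, htail]
    rw [withDensity_prod (ν 0) (Measure.pi fun j => ν (Fin.succAbove 0 j)) (hf 0) hgm
      inferInstance (haveI := hfin2; inferInstance)]
    have hcomp : (fun z : (O 0) × (∀ j, O (Fin.succAbove 0 j)) =>
        f 0 z.1 * ∏ j, f (Fin.succAbove 0 j) (z.2 j))
        = fun z => (fun x : ∀ i, O i => ∏ i, f i (x i)) (e.symm z) := by
      funext z
      simp only [he, MeasurableEquiv.piFinSuccAbove_symm_apply]
      rw [Fin.prod_univ_succ]
      simp
      rfl
    rw [hcomp]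
    have := map_withDensity_equiv e.symm (((ν 0).prod (Measure.pi fun j => ν (Fin.succAbove 0 j))))
      (f := fun x : ∀ i, O i => ∏ i, f i (x i)) hFm
    rw [this, ← h1.map_eq, MeasurableEquiv.map_symm_map]


lemma prod_le_left {α β : Type*} [MeasurableSpace α] [MeasurableSpace β]
    {μ μ' : Measure α} (ρ : Measure β) [IsProbabilityMeasure μ] [IsProbabilityMeasure μ']
    [IsProbabilityMeasure ρ] {δ : ℝ}
    (h : ∀ E, MeasurableSet E → μ E ≤ μ' E + ENNReal.ofReal δ) :
    ∀ E : Set (α × β), MeasurableSet E → μ.prod ρ E ≤ μ'.prod ρ E + ENNReal.ofReal δ := by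
  intro E hE
  rw [Measure.prod_apply_symm hE, Measure.prod_apply_symm hE]
  calc ∫⁻ y, μ ((fun x => (x, y)) ⁻¹' E) ∂ρ
      ≤ ∫⁻ y, (μ' ((fun x => (x, y)) ⁻¹' E) + ENNReal.ofReal δ) ∂ρ := by
        apply lintegral_mono
        intro y
        exact h _ (measurable_prodMk_right hE)
    _ = ∫⁻ y, μ' ((fun x => (x, y)) ⁻¹' E) ∂ρ + ENNReal.ofReal δ := by
        rw [lintegral_add_right _ measurable_const, lintegral_const, measure_univ, mul_one]

lemma prod_le_right {α β : Type*} [MeasurableSpace α] [MeasurableSpace β]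
    (ρ : Measure α) {μ μ' : Measure β} [IsProbabilityMeasure μ] [IsProbabilityMeasure μ']
    [IsProbabilityMeasure ρ] {δ : ℝ}
    (h : ∀ E, MeasurableSet E → μ E ≤ μ' E + ENNReal.ofReal δ) :
    ∀ E : Set (α × β), MeasurableSet E → ρ.prod μ E ≤ ρ.prod μ' E + ENNReal.ofReal δ := by
  intro E hE
  rw [Measure.prod_apply hE, Measure.prod_apply hE]
  calc ∫⁻ x, μ (Prod.mk x ⁻¹' E) ∂ρ
      ≤ ∫⁻ x, (μ' (Prod.mk x ⁻¹' E) + ENNReal.ofReal δ) ∂ρ := by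
        apply lintegral_mono
        intro x
        exact h _ (measurable_prodMk_left hE)
    _ = ∫⁻ x, μ' (Prod.mk x ⁻¹' E) ∂ρ + ENNReal.ofReal δ := by
        rw [lintegral_add_right _ measurable_const, lintegral_const, measure_univ, mul_one]

lemma pi_apply_le {k : ℕ} {O : Fin k → Type*} [∀ i, MeasurableSpace (O i)]
    (μ μ' : ∀ i, Measure (O i)) [∀ i, IsProbabilityMeasure (μ i)]
    [∀ i, IsProbabilityMeasure (μ' i)] (γs : Fin k → ℝ) (hγs : ∀ i, 0 ≤ γs i)
    (h : ∀ i, ∀ E, MeasurableSet E → μ i E ≤ μ' i E + ENNReal.ofReal (γs i)) :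
    ∀ E, MeasurableSet E →
      Measure.pi μ E ≤ Measure.pi μ' E + ENNReal.ofReal (∑ i, γs i) := by
  induction k with
  | zero =>
    intro E hE
    rw [prob_eq_of_subsingleton (Measure.pi μ) (Measure.pi μ')]
    exact le_add_right le_rfl
  | succ n ih =>
    intro E hE
    set e := MeasurableEquiv.piFinSuccAbove O 0 with he
    set E' : Set (O 0 × ∀ j, O (Fin.succAbove 0 j)) := e.symm ⁻¹' E with hE'def
    have hE' : MeasurableSet E' := e.symm.measurable hE
    have hpre : ∀ (m : ∀ i, Measure (O i)), (∀ i, IsProbabilityMeasure (m i)) →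
        Measure.pi m E = ((m 0).prod (Measure.pi fun j => m (Fin.succAbove 0 j))) E' := by
      intro m hm
      haveI := hm
      have h0 := measurePreserving_piFinSuccAbove m 0
      rw [← h0.map_eq, Measure.map_apply e.measurable hE']
      congr 1
      ext x
      simp [hE'def]
      exact iff_of_eq (congrArg (· ∈ E) (e.symm_apply_apply x)).symm
    rw [hpre μ inferInstance, hpre μ' inferInstance]
    have step1 := prod_le_left (Measure.pi fun j => μ (Fin.succAbove 0 j))
      (h 0) E' hE'
    have step2 := prod_le_right (μ' 0)
      (μ := Measure.pi fun j => μ (Fin.succAbove 0 j))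
      (μ' := Measure.pi fun j => μ' (Fin.succAbove 0 j))
      (ih _ _ _ (fun j => hγs _) (fun j => h _)) E' hE'
    calc ((μ 0).prod (Measure.pi fun j => μ (Fin.succAbove 0 j))) E'
        ≤ ((μ' 0).prod (Measure.pi fun j => μ (Fin.succAbove 0 j))) E'
            + ENNReal.ofReal (γs 0) := step1
      _ ≤ ((μ' 0).prod (Measure.pi fun j => μ' (Fin.succAbove 0 j))) E'
            + ENNReal.ofReal (∑ j, γs (Fin.succAbove 0 j)) + ENNReal.ofReal (γs 0) := by
          exact add_le_add_left step2 _
      _ = ((μ' 0).prod (Measure.pi fun j => μ' (Fin.succAbove 0 j))) E'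
            + ENNReal.ofReal (∑ i, γs i) := by
          rw [add_assoc, ← ENNReal.ofReal_add (Finset.sum_nonneg fun j _ => hγs _) (hγs 0)]
          congr 2
          rw [Fin.sum_univ_succ]
          simp [add_comm]

lemma integral_pi_prod {k : ℕ} {O : Fin k → Type*} [∀ i, MeasurableSpace (O i)]
    (m : ∀ i, Measure (O i)) [∀ i, IsProbabilityMeasure (m i)] (g : ∀ i, O i → ℝ) :
    ∫ x, ∏ i, g i (x i) ∂(Measure.pi m) = ∏ i, ∫ t, g i t ∂(m i) := by
  letI : ∀ i, MeasureSpace (O i) := fun i => ⟨m i⟩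
  haveI : ∀ i, SigmaFinite (volume : Measure (O i)) :=
    fun i => inferInstanceAs (SigmaFinite (m i))
  exact MeasureTheory.integral_fin_nat_prod_eq_prod g


lemma decomp {Ω : Type*} [MeasurableSpace Ω] (μ ν : Measure Ω)
    [IsProbabilityMeasure μ] [IsProbabilityMeasure ν] {ε γ : ℝ} (hε : 0 ≤ ε) (hγ : 0 ≤ γ)
    (hup : ∀ E, MeasurableSet E → (μ E).toReal ≤ Real.exp ε * (ν E).toReal + γ)
    (hdown : ∀ E, MeasurableSet E → (ν E).toReal ≤ Real.exp ε * (μ E).toReal + γ) :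
    ∃ φ : Ω → ℝ, Measurable φ ∧ (∀ x, φ x ∈ Set.Icc (Real.exp (-ε)) (Real.exp ε)) ∧
      (ν.withDensity fun x => ENNReal.ofReal (φ x)) Set.univ = 1 ∧
      ∀ E, MeasurableSet E →
        (μ E).toReal ≤ ((ν.withDensity fun x => ENNReal.ofReal (φ x)) E).toReal + γ := by
  classical
  set lam : Measure Ω := μ + ν with hlam
  have hμlam : μ ≪ lam := Measure.absolutelyContinuous_of_le (Measure.le_add_right le_rfl)
  have hνlam : ν ≪ lam := Measure.absolutelyContinuous_of_le (Measure.le_add_left le_rfl)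
  set pr : Ω → ℝ := fun x => (μ.rnDeriv lam x).toReal with hprdef
  set qr : Ω → ℝ := fun x => (ν.rnDeriv lam x).toReal with hqrdef
  have hprm : Measurable pr := (Measure.measurable_rnDeriv _ _).ennreal_toReal
  have hqrm : Measurable qr := (Measure.measurable_rnDeriv _ _).ennreal_toReal
  have hpr0 : ∀ x, 0 ≤ pr x := fun x => ENNReal.toReal_nonneg
  have hqr0 : ∀ x, 0 ≤ qr x := fun x => ENNReal.toReal_nonneg
  have hFp : ∀ E : Set Ω, ∫ x in E, pr x ∂lam = (μ E).toReal := fun E =>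
    Measure.setIntegral_toReal_rnDeriv hμlam E
  have hFq : ∀ E : Set Ω, ∫ x in E, qr x ∂lam = (ν E).toReal := fun E =>
    Measure.setIntegral_toReal_rnDeriv hνlam E
  have hIp : Integrable pr lam := Measure.integrable_toReal_rnDeriv
  have hIq : Integrable qr lam := Measure.integrable_toReal_rnDeriv
  have hp1 : ∫ x, pr x ∂lam = 1 := by
    rw [Measure.integral_toReal_rnDeriv hμlam]; simp
  have hq1 : ∫ x, qr x ∂lam = 1 := by
    rw [Measure.integral_toReal_rnDeriv hνlam]; simp
  set a : ℝ := Real.exp ε with ha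
  set a' : ℝ := Real.exp (-ε) with ha'
  have ha0 : 0 < a := Real.exp_pos _
  have ha'0 : 0 < a' := Real.exp_pos _
  have ha1 : 1 ≤ a := Real.one_le_exp hε
  have ha'1 : a' ≤ 1 := Real.exp_le_one_iff.mpr (by linarith)
  have haa' : a' * a = 1 := by rw [ha, ha', ← Real.exp_add]; simp
  have ha'lea : a' ≤ a := ha'1.trans ha1
  -- clamped density
  set dens : Ω → ℝ := fun x => min (max (pr x) (a' * qr x)) (a * qr x) with hdens
  have hdm : Measurable dens := (hprm.max (hqrm.const_mul a')).min (hqrm.const_mul a)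
  have hd_le : ∀ x, dens x ≤ a * qr x := fun x => min_le_right _ _
  have hd_ge : ∀ x, a' * qr x ≤ dens x := fun x =>
    le_min (le_max_right _ _) (by nlinarith [hqr0 x])
  have hd0 : ∀ x, 0 ≤ dens x := fun x => le_trans (by nlinarith [hqr0 x]) (hd_ge x)
  have hdInt : Integrable dens lam := by
    refine (hIq.const_mul a).mono' hdm.aestronglyMeasurable (ae_of_all _ fun x => ?_)
    rw [Real.norm_eq_abs, abs_of_nonneg (hd0 x)]
    exact hd_le x
  set P : Ω → ℝ := fun x => max (pr x - a * qr x) 0 with hP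
  set Q : Ω → ℝ := fun x => max (a' * qr x - pr x) 0 with hQ
  have hPm : Measurable P := (hprm.sub (hqrm.const_mul a)).max measurable_const
  have hQm : Measurable Q := ((hqrm.const_mul a').sub hprm).max measurable_const
  have hP0 : ∀ x, 0 ≤ P x := fun x => le_max_right _ _
  have hQ0 : ∀ x, 0 ≤ Q x := fun x => le_max_right _ _
  have hPle : ∀ x, P x ≤ pr x := fun x =>
    max_le (by nlinarith [hqr0 x]) (hpr0 x)
  have hQle : ∀ x, Q x ≤ a' * qr x := fun x =>
    max_le (by nlinarith [hpr0 x]) (by nlinarith [hqr0 x])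
  have hIP : Integrable P lam := by
    refine hIp.mono' hPm.aestronglyMeasurable (ae_of_all _ fun x => ?_)
    rw [Real.norm_eq_abs, abs_of_nonneg (hP0 x)]; exact hPle x
  have hIQ : Integrable Q lam := by
    refine (hIq.const_mul a').mono' hQm.aestronglyMeasurable (ae_of_all _ fun x => ?_)
    rw [Real.norm_eq_abs, abs_of_nonneg (hQ0 x)]; exact hQle x
  set mP : ℝ := ∫ x, P x ∂lam with hmP
  set mQ : ℝ := ∫ x, Q x ∂lam with hmQ
  have hmP0 : 0 ≤ mP := integral_nonneg hP0
  have hmQ0 : 0 ≤ mQ := integral_nonneg hQ0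
  -- mP ≤ γ
  have hmPγ : mP ≤ γ := by
    set S : Set Ω := {x | a * qr x < pr x} with hS
    have hSm : MeasurableSet S := measurableSet_lt (hqrm.const_mul a) hprm
    have hsplit : mP = ∫ x in S, P x ∂lam + ∫ x in Sᶜ, P x ∂lam :=
      (integral_add_compl hSm hIP).symm
    have hcompl : ∫ x in Sᶜ, P x ∂lam = 0 := by
      apply setIntegral_eq_zero_of_forall_eq_zero
      intro x hx
      simp only [Set.mem_compl_iff, hS, Set.mem_setOf_eq, not_lt] at hx
      simp only [hP, max_eq_right (by linarith : pr x - a * qr x ≤ 0)]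
    have honS : ∫ x in S, P x ∂lam = ∫ x in S, (pr x - a * qr x) ∂lam := by
      apply setIntegral_congr_fun hSm
      intro x hx
      simp only [hS, Set.mem_setOf_eq] at hx
      simp only [hP, max_eq_left (by linarith : (0:ℝ) ≤ pr x - a * qr x)]
    have hsub : ∫ x in S, (pr x - a * qr x) ∂lam
        = (μ S).toReal - a * (ν S).toReal := by
      rw [integral_sub hIp.integrableOn ((hIq.const_mul a).integrableOn),
        integral_const_mul, hFp S, hFq S]
    have := hup S hSm
    rw [hsplit, hcompl, honS, hsub]
    linarith
  -- mQ ≤ γ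
  have hmQγ : mQ ≤ γ := by
    set S : Set Ω := {x | pr x < a' * qr x} with hS
    have hSm : MeasurableSet S := measurableSet_lt hprm (hqrm.const_mul a')
    have hsplit : mQ = ∫ x in S, Q x ∂lam + ∫ x in Sᶜ, Q x ∂lam :=
      (integral_add_compl hSm hIQ).symm
    have hcompl : ∫ x in Sᶜ, Q x ∂lam = 0 := by
      apply setIntegral_eq_zero_of_forall_eq_zero
      intro x hx
      simp only [Set.mem_compl_iff, hS, Set.mem_setOf_eq, not_lt] at hx
      simp only [hQ, max_eq_right (by linarith : a' * qr x - pr x ≤ 0)]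
    have honS : ∫ x in S, Q x ∂lam = ∫ x in S, (a' * qr x - pr x) ∂lam := by
      apply setIntegral_congr_fun hSm
      intro x hx
      simp only [hS, Set.mem_setOf_eq] at hx
      simp only [hQ, max_eq_left (by linarith : (0:ℝ) ≤ a' * qr x - pr x)]
    have hsub : ∫ x in S, (a' * qr x - pr x) ∂lam
        = a' * (ν S).toReal - (μ S).toReal := by
      rw [integral_sub ((hIq.const_mul a').integrableOn) hIp.integrableOn,
        integral_const_mul, hFp S, hFq S]
    have hd := hdown S hSm
    have hmul : a' * (ν S).toReal ≤ a' * (a * (μ S).toReal + γ) :=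
      mul_le_mul_of_nonneg_left hd ha'0.le
    rw [hsplit, hcompl, honS, hsub]
    have : a' * (a * (μ S).toReal + γ) = (μ S).toReal + a' * γ := by
      rw [mul_add, ← mul_assoc, haa', one_mul]
    rw [this] at hmul
    nlinarith
  -- pointwise identity dens = pr + Q - P
  have hdid : ∀ x, dens x = pr x + Q x - P x := by
    intro x
    have hq := hqr0 x
    have haq : a' * qr x ≤ a * qr x := by nlinarith
    rcases le_or_gt (pr x) (a' * qr x) with h1 | h1
    · have hdx : dens x = a' * qr x := by
        have hmax : max (pr x) (a' * qr x) = a' * qr x := max_eq_right h1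
        show min (max (pr x) (a' * qr x)) (a * qr x) = a' * qr x
        rw [hmax]; exact min_eq_left haq
      have hQx : Q x = a' * qr x - pr x := max_eq_left (by linarith)
      have hPx : P x = 0 := max_eq_right (by linarith)
      rw [hdx, hQx, hPx]; ring
    · have hmax : max (pr x) (a' * qr x) = pr x := max_eq_left h1.le
      rcases le_or_gt (pr x) (a * qr x) with h2 | h2
      · have hdx : dens x = pr x := by
          show min (max (pr x) (a' * qr x)) (a * qr x) = pr x
          rw [hmax]; exact min_eq_left h2
        have hQx : Q x = 0 := max_eq_right (by linarith)
        have hPx : P x = 0 := max_eq_right (by linarith)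
        rw [hdx, hQx, hPx]; ring
      · have hdx : dens x = a * qr x := by
          show min (max (pr x) (a' * qr x)) (a * qr x) = a * qr x
          rw [hmax]; exact min_eq_right h2.le
        have hQx : Q x = 0 := max_eq_right (by linarith)
        have hPx : P x = pr x - a * qr x := max_eq_left (by linarith)
        rw [hdx, hQx, hPx]; ring
  set s₀ : ℝ := ∫ x, dens x ∂lam with hs₀
  have hs₀eq : s₀ = 1 + mQ - mP := by
    have hIpQ : Integrable (fun x => pr x + Q x) lam := hIp.add hIQ
    rw [hs₀, integral_congr_ae (ae_of_all _ hdid)]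
    rw [integral_sub hIpQ hIP, integral_add hIp hIQ, hp1]
  have hs₀a' : a' ≤ s₀ := by
    have : ∫ x, a' * qr x ∂lam ≤ s₀ := integral_mono (hIq.const_mul a') hdInt hd_ge
    rwa [integral_const_mul, hq1, mul_one] at this
  have hs₀a : s₀ ≤ a := by
    have : s₀ ≤ ∫ x, a * qr x ∂lam := integral_mono hdInt (hIq.const_mul a) hd_le
    rwa [integral_const_mul, hq1, mul_one] at this
  have hIaq : Integrable (fun x => a * qr x) lam := hIq.const_mul a
  have hIa'q : Integrable (fun x => a' * qr x) lam := hIq.const_mul a'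
  -- unified construction of the λ-density f
  obtain ⟨f, hfm, hfge, hfle, hfInt, hfmass, hfclose⟩ :
      ∃ f : Ω → ℝ, Measurable f ∧ (∀ x, a' * qr x ≤ f x) ∧ (∀ x, f x ≤ a * qr x) ∧
        Integrable f lam ∧ (∫ x, f x ∂lam) = 1 ∧
        ∀ E : Set Ω, MeasurableSet E → (μ E).toReal ≤ ∫ x in E, f x ∂lam + γ := by
    have hEbound : ∀ (f : Ω → ℝ), (∀ x, 0 ≤ pr x - f x → pr x - f x ≤ P x + (s₀ - 1)) →
        True := fun _ _ => trivial
    rcases le_or_gt s₀ 1 with hcase | hcase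
    · -- add mass: f = dens + c * (a*qr - dens)
      set c : ℝ := (1 - s₀) / (a - s₀) with hc
      have hca : s₀ ≤ a := hs₀a
      have hc0 : 0 ≤ c := div_nonneg (by linarith) (by linarith)
      have hc1 : c ≤ 1 := by
        rcases eq_or_lt_of_le hca with he | hlt
        · have : (1:ℝ) ≤ a := ha1
          have hs1 : s₀ = 1 := le_antisymm hcase (by rw [he] at *; linarith)
          rw [hc, hs1, ← he, hs1]
          simp
        · rw [hc, div_le_one (by linarith)]; linarith
      have hI2 : Integrable (fun x => c * (a * qr x - dens x)) lam := by
        have h0 : Integrable (fun x => a * qr x - dens x) lam := hIaq.sub hdInt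
        exact h0.const_mul c
      refine ⟨fun x => dens x + c * (a * qr x - dens x),
        hdm.add (((hqrm.const_mul a).sub hdm).const_mul c), ?_, ?_, ?_, ?_, ?_⟩
      · intro x
        dsimp only
        have h1 := hd_ge x
        have h2 := hd_le x
        nlinarith [mul_nonneg hc0 (sub_nonneg.mpr h2)]
      · intro x
        dsimp only
        have h1 := hd_le x
        nlinarith [mul_nonneg (sub_nonneg.mpr hc1) (sub_nonneg.mpr h1)]
      · exact hdInt.add hI2
      · rw [integral_add hdInt hI2, integral_const_mul,
          integral_sub hIaq hdInt, integral_const_mul, hq1, mul_one, ← hs₀]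
        rcases eq_or_lt_of_le hca with he | hlt
        · have hs1 : s₀ = 1 := le_antisymm hcase (by rw [he] at *; linarith)
          have hc' : c = 0 := by rw [hc, hs1]; simp
          rw [hs1, hc']; ring
        · rw [hc]
          rw [div_mul_cancel₀ _ (by linarith : a - s₀ ≠ 0)]
          ring
      · intro E hE
        have hpw : ∀ x, pr x ≤ (dens x + c * (a * qr x - dens x)) + P x := by
          intro x
          have h1 := hdid x
          have h2 := hQ0 x
          have h3 := hd_le x
          nlinarith
        have hIdc : Integrable (fun x => dens x + c * (a * qr x - dens x)) lam := hdInt.add hI2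
        have hmono : ∫ x in E, pr x ∂lam
            ≤ ∫ x in E, ((dens x + c * (a * qr x - dens x)) + P x) ∂lam := by
          apply setIntegral_mono_on hIp.integrableOn
            (hIdc.add hIP).integrableOn hE
          exact fun x _ => hpw x
        rw [integral_add hIdc.integrableOn hIP.integrableOn] at hmono
        have hPE : ∫ x in E, P x ∂lam ≤ mP := by
          rw [hmP]
          exact setIntegral_le_integral hIP (ae_of_all _ hP0)
        rw [hFp E] at hmono
        linarith
    · -- remove mass: f = dens - c * (dens - a'*qr)
      set c : ℝ := (s₀ - 1) / (s₀ - a') with hc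
      have hden : 0 < s₀ - a' := by linarith
      have hc0 : 0 ≤ c := div_nonneg (by linarith) hden.le
      have hc1 : c ≤ 1 := by rw [hc, div_le_one hden]; linarith
      have hIcd : Integrable (fun x => c * (dens x - a' * qr x)) lam := by
        have h0 : Integrable (fun x => dens x - a' * qr x) lam := hdInt.sub hIa'q
        exact h0.const_mul c
      refine ⟨fun x => dens x - c * (dens x - a' * qr x),
        hdm.sub ((hdm.sub (hqrm.const_mul a')).const_mul c), ?_, ?_, ?_, ?_, ?_⟩
      · intro x
        dsimp only
        have h1 := hd_ge x
        nlinarith [mul_nonneg (sub_nonneg.mpr hc1) (sub_nonneg.mpr h1)]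
      · intro x
        dsimp only
        have h1 := hd_ge x
        have h2 := hd_le x
        nlinarith [mul_nonneg hc0 (sub_nonneg.mpr h1)]
      · exact hdInt.sub hIcd
      · rw [integral_sub hdInt hIcd, integral_const_mul,
          integral_sub hdInt hIa'q, integral_const_mul, hq1, mul_one, ← hs₀, hc,
          div_mul_cancel₀ _ hden.ne']
        ring
      · intro E hE
        have hpw : ∀ x, pr x ≤ (dens x - c * (dens x - a' * qr x)) + (P x + c * (dens x - a' * qr x)) := by
          intro x
          have h1 := hdid x
          have h2 := hQ0 x
          nlinarith
        have hIdc2 : Integrable (fun x => dens x - c * (dens x - a' * qr x)) lam := hdInt.sub hIcd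
        have hIPc : Integrable (fun x => P x + c * (dens x - a' * qr x)) lam := hIP.add hIcd
        have hmono : ∫ x in E, pr x ∂lam
            ≤ ∫ x in E, ((dens x - c * (dens x - a' * qr x)) + (P x + c * (dens x - a' * qr x))) ∂lam := by
          apply setIntegral_mono_on hIp.integrableOn
            (hIdc2.add hIPc).integrableOn hE
          exact fun x _ => hpw x
        rw [integral_add hIdc2.integrableOn hIPc.integrableOn] at hmono
        have hPE : ∫ x in E, (P x + c * (dens x - a' * qr x)) ∂lam
            ≤ ∫ x, (P x + c * (dens x - a' * qr x)) ∂lam := by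
          apply setIntegral_le_integral hIPc
          apply ae_of_all
          intro x
          have h1 := hP0 x
          have h2 := hd_ge x
          have h3 : 0 ≤ c * (dens x - a' * qr x) := mul_nonneg hc0 (by linarith)
          positivity
        have htot : ∫ x, (P x + c * (dens x - a' * qr x)) ∂lam = mP + c * (s₀ - a') := by
          rw [integral_add hIP hIcd, integral_const_mul, integral_sub hdInt hIa'q,
            integral_const_mul, hq1, mul_one, hmP, ← hs₀]
        have hcs : c * (s₀ - a') = s₀ - 1 := by
          rw [hc, div_mul_cancel₀ _ hden.ne']
        rw [hFp E] at hmono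
        rw [htot, hcs] at hPE
        linarith
  -- define φ
  set φ : Ω → ℝ := fun x => if qr x = 0 then 1 else f x / qr x with hφ
  have hφm : Measurable φ := by
    apply Measurable.ite (hqrm (measurableSet_singleton 0)) measurable_const
    exact hfm.div hqrm
  have hφmem : ∀ x, φ x ∈ Set.Icc a' a := by
    intro x
    rw [hφ]
    by_cases hq : qr x = 0
    · simp only [hq, if_pos]
      exact ⟨ha'1, ha1⟩
    · simp only [hq, if_neg, if_false]
      have hqpos : 0 < qr x := lt_of_le_of_ne (hqr0 x) (Ne.symm hq)
      constructor
      · rw [le_div_iff₀ hqpos]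
        exact hfge x
      · rw [div_le_iff₀ hqpos]
        exact hfle x
  have hφ0 : ∀ x, 0 ≤ φ x := fun x => ha'0.le.trans (hφmem x).1
  have hφq : ∀ x, φ x * qr x = f x := by
    intro x
    rw [hφ]
    by_cases hq : qr x = 0
    · simp only [hq, if_pos, one_mul]
      have h1 := hfge x
      have h2 := hfle x
      rw [hq] at h1 h2
      simp only [mul_zero] at h1 h2
      linarith
    · simp only [hq, if_neg, if_false]
      field_simp
  -- key computation of the withDensity measure
  have key : ∀ E : Set Ω, MeasurableSet E →
      (ν.withDensity fun x => ENNReal.ofReal (φ x)) E = ENNReal.ofReal (∫ x in E, f x ∂lam) := by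
    intro E hE
    rw [withDensity_apply _ hE]
    have hν : ν = lam.withDensity (ν.rnDeriv lam) :=
      (Measure.withDensity_rnDeriv_eq ν lam hνlam).symm
    rw [hν]
    rw [setLIntegral_withDensity_eq_setLIntegral_mul lam (Measure.measurable_rnDeriv _ _)
      (hφm.ennreal_ofReal) hE]
    have hae : ∀ᵐ x ∂lam, x ∈ E → (ν.rnDeriv lam * fun x => ENNReal.ofReal (φ x)) x
        = ENNReal.ofReal (f x) := by
      filter_upwards [Measure.rnDeriv_lt_top ν lam] with x hx _
      simp only [Pi.mul_apply]
      have : ν.rnDeriv lam x = ENNReal.ofReal (qr x) := by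
        rw [hqrdef]
        simp [ENNReal.ofReal_toReal hx.ne]
      rw [this, ← ENNReal.ofReal_mul (hqr0 x), mul_comm (qr x) (φ x), hφq x]
    rw [setLIntegral_congr_fun_ae hE hae]
    rw [← ofReal_integral_eq_lintegral_ofReal hfInt.integrableOn]
    apply ae_of_all
    intro x
    exact le_trans (mul_nonneg ha'0.le (hqr0 x)) (hfge x)
  have hf0 : ∀ x, 0 ≤ f x := fun x => le_trans (mul_nonneg ha'0.le (hqr0 x)) (hfge x)
  have huniv : (ν.withDensity fun x => ENNReal.ofReal (φ x)) Set.univ = 1 := by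
    rw [key Set.univ MeasurableSet.univ, setIntegral_univ, hfmass, ENNReal.ofReal_one]
  refine ⟨φ, hφm, hφmem, huniv, fun E hE => ?_⟩
  rw [key E hE, ENNReal.toReal_ofReal (setIntegral_nonneg hE fun x _ => hf0 x)]
  exact hfclose E hE


lemma kl_bound {Ω : Type*} [MeasurableSpace Ω] (ν : Measure Ω) [IsProbabilityMeasure ν]
    {φ : Ω → ℝ} (hφm : Measurable φ) {ε : ℝ} (hε : 0 ≤ ε)
    (hmem : ∀ x, φ x ∈ Set.Icc (Real.exp (-ε)) (Real.exp ε))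
    (hmass : ∫ x, φ x ∂ν = 1) :
    ∫ x, φ x * Real.log (φ x) ∂ν ≤ ε * (Real.exp ε - 1) := by
  have hφpos : ∀ x, 0 < φ x := fun x => (Real.exp_pos _).trans_le (hmem x).1
  have hlog_ub : ∀ x, Real.log (φ x) ≤ ε := by
    intro x
    calc Real.log (φ x) ≤ Real.log (Real.exp ε) :=
      Real.log_le_log (hφpos x) (hmem x).2
    _ = ε := Real.log_exp ε
  have hlog_lb : ∀ x, -ε ≤ Real.log (φ x) := by
    intro x
    calc -ε = Real.log (Real.exp (-ε)) := (Real.log_exp _).symm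
    _ ≤ Real.log (φ x) := Real.log_le_log (Real.exp_pos _) (hmem x).1
  have hlogm : Measurable fun x => Real.log (φ x) := Real.measurable_log.comp hφm
  have hφb : ∀ x, |φ x| ≤ Real.exp ε := fun x => by
    rw [abs_of_pos (hφpos x)]; exact (hmem x).2
  have hIφ : Integrable φ ν := by
    refine (integrable_const (Real.exp ε)).mono' hφm.aestronglyMeasurable (ae_of_all _ ?_)
    intro x; rw [Real.norm_eq_abs]; exact hφb x
  have hIlog : Integrable (fun x => Real.log (φ x)) ν := by
    refine (integrable_const ε).mono' hlogm.aestronglyMeasurable (ae_of_all _ ?_)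
    intro x; rw [Real.norm_eq_abs, abs_le]; exact ⟨hlog_lb x, hlog_ub x⟩
  have hIφlog : Integrable (fun x => φ x * Real.log (φ x)) ν := by
    refine (integrable_const (Real.exp ε * ε)).mono'
      (hφm.mul hlogm).aestronglyMeasurable (ae_of_all _ ?_)
    intro x
    rw [Real.norm_eq_abs, abs_mul]
    apply mul_le_mul (hφb x) (abs_le.mpr ⟨hlog_lb x, hlog_ub x⟩) (abs_nonneg _)
      (Real.exp_nonneg _)
  have hIneg : Integrable (fun x => -Real.log (φ x)) ν := hIlog.neg
  -- ∫ -log φ ≥ 0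
  have hneglog : 0 ≤ ∫ x, -Real.log (φ x) ∂ν := by
    have hpw : ∀ x, 1 - φ x ≤ -Real.log (φ x) := by
      intro x
      have := Real.log_le_sub_one_of_pos (hφpos x)
      linarith
    have h1 : ∫ x, (1 - φ x) ∂ν ≤ ∫ x, -Real.log (φ x) ∂ν :=
      integral_mono ((integrable_const 1).sub hIφ) hIneg hpw
    have h2 : ∫ x, (1 - φ x) ∂ν = 0 := by
      rw [integral_sub (integrable_const 1) hIφ, hmass]
      simp
    linarith
  have step1 : ∫ x, φ x * Real.log (φ x) ∂ν ≤ ∫ x, (φ x - 1) * Real.log (φ x) ∂ν := by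
    have hId : Integrable (fun x => (φ x - 1) * Real.log (φ x)) ν := by
      have : (fun x => (φ x - 1) * Real.log (φ x))
          = fun x => φ x * Real.log (φ x) + -Real.log (φ x) := by
        funext x; ring
      rw [this]
      exact hIφlog.add hIneg
    have hsplit : ∫ x, (φ x - 1) * Real.log (φ x) ∂ν
        = ∫ x, φ x * Real.log (φ x) ∂ν + ∫ x, -Real.log (φ x) ∂ν := by
      rw [← integral_add hIφlog hIneg]
      congr 1; funext x; ring
    linarith [hsplit, hneglog]
  have step2 : ∫ x, (φ x - 1) * Real.log (φ x) ∂ν ≤ ε * (Real.exp ε - 1) := by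
    have hpw : ∀ x, (φ x - 1) * Real.log (φ x) ≤ ε * (Real.exp ε - 1) := by
      intro x
      rcases le_or_gt 1 (φ x) with h1 | h1
      · have hl0 : 0 ≤ Real.log (φ x) := Real.log_nonneg h1
        have : φ x - 1 ≤ Real.exp ε - 1 := by linarith [(hmem x).2]
        calc (φ x - 1) * Real.log (φ x) ≤ (Real.exp ε - 1) * ε :=
          mul_le_mul this (hlog_ub x) hl0 (by nlinarith [Real.one_le_exp hε])
        _ = ε * (Real.exp ε - 1) := by ring
      · have hl0 : Real.log (φ x) ≤ 0 := Real.log_nonpos (hφpos x).le h1.le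
        have hexp2 : 2 ≤ Real.exp ε + Real.exp (-ε) := by
          have e1 : Real.exp (ε/2) * Real.exp (ε/2) = Real.exp ε := by
            rw [← Real.exp_add]; ring_nf
          have e2 : Real.exp (-(ε/2)) * Real.exp (-(ε/2)) = Real.exp (-ε) := by
            rw [← Real.exp_add]; ring_nf
          have e3 : Real.exp (ε/2) * Real.exp (-(ε/2)) = 1 := by
            rw [← Real.exp_add]; simp
          nlinarith [sq_nonneg (Real.exp (ε/2) - Real.exp (-(ε/2)))]
        have hb1 : 1 - φ x ≤ Real.exp ε - 1 := by
          have := (hmem x).1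
          linarith
        have hb2 : -Real.log (φ x) ≤ ε := by linarith [hlog_lb x]
        calc (φ x - 1) * Real.log (φ x) = (1 - φ x) * (-Real.log (φ x)) := by ring
        _ ≤ (Real.exp ε - 1) * ε :=
          mul_le_mul hb1 hb2 (by linarith) (by nlinarith [Real.one_le_exp hε])
        _ = ε * (Real.exp ε - 1) := by ring
    have hId : Integrable (fun x => (φ x - 1) * Real.log (φ x)) ν := by
      have : (fun x => (φ x - 1) * Real.log (φ x))
          = fun x => φ x * Real.log (φ x) + -Real.log (φ x) := by
        funext x; ring
      rw [this]
      exact hIφlog.add hIneg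
    calc ∫ x, (φ x - 1) * Real.log (φ x) ∂ν ≤ ∫ _x, ε * (Real.exp ε - 1) ∂ν :=
      integral_mono hId (integrable_const _) hpw
    _ = ε * (Real.exp ε - 1) := by simp
  linarith


lemma upper {k : ℕ} {O : Fin k → Type*} [∀ i, MeasurableSpace (O i)]
    (μ ν : ∀ i, Measure (O i)) [∀ i, IsProbabilityMeasure (μ i)]
    [∀ i, IsProbabilityMeasure (ν i)]
    (ε' : ℝ) (hε' : 0 ≤ ε') (εs γs : Fin k → ℝ) (hεs0 : ∀ i, 0 ≤ εs i)
    (hγs0 : ∀ i, 0 ≤ γs i) (hεs : ∀ i, εs i ≤ ε')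
    (hup : ∀ i E, MeasurableSet E → ((μ i) E).toReal ≤ Real.exp (εs i) * ((ν i) E).toReal + γs i)
    (hdown : ∀ i E, MeasurableSet E → ((ν i) E).toReal ≤ Real.exp (εs i) * ((μ i) E).toReal + γs i)
    (γ : ℝ) (hγ0 : 0 < γ) (hγ1 : γ ≤ 1) :
    ∀ E, MeasurableSet E → (Measure.pi μ E).toReal ≤
      Real.exp (Real.sqrt (2 * Real.log (1/γ) * k) * ε' + k * ε' * (Real.exp ε' - 1))
        * (Measure.pi ν E).toReal + (γ + ∑ i, γs i) := by
  intro E hE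
  have hdec : ∀ i, ∃ φ : O i → ℝ, Measurable φ ∧
      (∀ x, φ x ∈ Set.Icc (Real.exp (-(εs i))) (Real.exp (εs i))) ∧
      ((ν i).withDensity fun x => ENNReal.ofReal (φ x)) Set.univ = 1 ∧
      ∀ E, MeasurableSet E →
        ((μ i) E).toReal ≤ (((ν i).withDensity fun x => ENNReal.ofReal (φ x)) E).toReal + γs i :=
    fun i => decomp (μ i) (ν i) (hεs0 i) (hγs0 i) (hup i) (hdown i)
  choose φ hφm hφmem hφu hφc using hdec
  set μt : ∀ i, Measure (O i) := fun i => (ν i).withDensity fun x => ENNReal.ofReal (φ i x)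
    with hμt
  haveI hμtprob : ∀ i, IsProbabilityMeasure (μt i) := fun i => ⟨hφu i⟩
  have hφpos : ∀ i x, 0 < φ i x := fun i x => (Real.exp_pos _).trans_le (hφmem i x).1
  set X : ∀ i, O i → ℝ := fun i t => Real.log (φ i t) with hX
  have hXm : ∀ i, Measurable (X i) := fun i => Real.measurable_log.comp (hφm i)
  have hXub : ∀ i x, X i x ≤ εs i := by
    intro i x
    have := Real.log_le_log (hφpos i x) (hφmem i x).2
    rwa [Real.log_exp] at this
  have hXlb : ∀ i x, -(εs i) ≤ X i x := by
    intro i x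
    have := Real.log_le_log (Real.exp_pos _) (hφmem i x).1
    rwa [Real.log_exp] at this
  set L : ℝ := Real.log (1/γ) with hL
  have hL0 : 0 ≤ L := by
    rw [hL]
    apply Real.log_nonneg
    rw [le_div_iff₀ hγ0]; linarith
  set c : ℝ := Real.sqrt (2 * L * k) * ε' + k * ε' * (Real.exp ε' - 1) with hc
  have hexpε'1 : 1 ≤ Real.exp ε' := Real.one_le_exp hε'
  have hc0 : 0 ≤ c := by
    rw [hc]
    have h1 : 0 ≤ Real.sqrt (2 * L * k) * ε' := mul_nonneg (Real.sqrt_nonneg _) hε'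
    have h2 : 0 ≤ (k:ℝ) * ε' * (Real.exp ε' - 1) := by
      apply mul_nonneg (mul_nonneg (Nat.cast_nonneg k) hε'); linarith
    linarith
  set g : (∀ i, O i) → ℝ := fun x => ∑ i, X i (x i) with hg
  have hgm : Measurable g :=
    Finset.measurable_sum _ fun i _ => (hXm i).comp (measurable_pi_apply i)
  set S : Set (∀ i, O i) := {x | g x ≤ c} with hSdef
  have hSm : MeasurableSet S := measurableSet_le hgm measurable_const
  -- step h1
  have h1 : Measure.pi μ E ≤ Measure.pi μt E + ENNReal.ofReal (∑ i, γs i) := by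
    apply pi_apply_le μ μt γs hγs0 _ E hE
    intro i E' hE'
    have hr := hφc i E' hE'
    calc μ i E' = ENNReal.ofReal ((μ i E').toReal) :=
          (ENNReal.ofReal_toReal (measure_ne_top _ _)).symm
      _ ≤ ENNReal.ofReal ((μt i E').toReal + γs i) := ENNReal.ofReal_le_ofReal hr
      _ = ENNReal.ofReal ((μt i E').toReal) + ENNReal.ofReal (γs i) :=
          ENNReal.ofReal_add ENNReal.toReal_nonneg (hγs0 i)
      _ = μt i E' + ENNReal.ofReal (γs i) := by
          rw [ENNReal.ofReal_toReal (measure_ne_top _ _)]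
  -- step h2
  have h2 : Measure.pi μt E ≤ Measure.pi μt (E ∩ S) + Measure.pi μt Sᶜ := by
    calc Measure.pi μt E ≤ Measure.pi μt ((E ∩ S) ∪ Sᶜ) := by
          apply measure_mono
          intro x hx
          by_cases hxS : x ∈ S
          · exact Or.inl ⟨hx, hxS⟩
          · exact Or.inr hxS
      _ ≤ Measure.pi μt (E ∩ S) + Measure.pi μt Sᶜ := measure_union_le _ _
  -- product density
  have hwd : Measure.pi μt
      = (Measure.pi ν).withDensity (fun x => ∏ i, ENNReal.ofReal (φ i (x i))) :=
    pi_withDensity ν _ (fun i => (hφm i).ennreal_ofReal) hμtprob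
  -- step h3
  have h3 : Measure.pi μt (E ∩ S) ≤ ENNReal.ofReal (Real.exp c) * Measure.pi ν E := by
    rw [hwd, withDensity_apply _ (hE.inter hSm)]
    have hpw : ∀ x ∈ E ∩ S, ∏ i, ENNReal.ofReal (φ i (x i)) ≤ ENNReal.ofReal (Real.exp c) := by
      intro x hx
      have hprod : ∏ i, ENNReal.ofReal (φ i (x i)) = ENNReal.ofReal (∏ i, φ i (x i)) :=
        (ENNReal.ofReal_prod_of_nonneg fun i _ => (hφpos i (x i)).le).symm
      have hexp : ∏ i, φ i (x i) = Real.exp (g x) := by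
        rw [hg, Real.exp_sum]
        exact Finset.prod_congr rfl fun i _ => (Real.exp_log (hφpos i (x i))).symm
      rw [hprod, hexp]
      exact ENNReal.ofReal_le_ofReal (Real.exp_le_exp.mpr hx.2)
    calc ∫⁻ x in E ∩ S, ∏ i, ENNReal.ofReal (φ i (x i)) ∂(Measure.pi ν)
        ≤ ∫⁻ _x in E ∩ S, ENNReal.ofReal (Real.exp c) ∂(Measure.pi ν) :=
          setLIntegral_mono measurable_const hpw
      _ = ENNReal.ofReal (Real.exp c) * Measure.pi ν (E ∩ S) := by
          rw [setLIntegral_const]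
      _ ≤ ENNReal.ofReal (Real.exp c) * Measure.pi ν E := by
          exact mul_le_mul_right (measure_mono Set.inter_subset_left) _
  -- step h4 : Chernoff
  have h4 : Measure.pi μt Sᶜ ≤ ENNReal.ofReal γ := by
    rw [ENNReal.le_ofReal_iff_toReal_le (measure_ne_top _ _) hγ0.le]
    by_cases hγ1' : γ = 1
    · rw [hγ1']
      exact ENNReal.toReal_le_of_le_ofReal zero_le_one (by simpa using prob_le_one)
    have hγlt : γ < 1 := lt_of_le_of_ne hγ1 hγ1'
    by_cases htriv : ∀ x, g x ≤ c
    · have : Sᶜ = ∅ := by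
        ext x; simp [hSdef, htriv x]
      simp [this, hγ0.le]
    -- nontrivial case: k ≠ 0 and ε' ≠ 0
    push_neg at htriv
    have hk0 : k ≠ 0 := by
      rintro rfl
      obtain ⟨x, hx⟩ := htriv
      rw [hg] at hx
      simp at hx
      exact absurd hc0 (by linarith)
    have hε'0 : ε' ≠ 0 := by
      rintro rfl
      obtain ⟨x, hx⟩ := htriv
      have hg0 : g x = 0 := by
        rw [hg]
        apply Finset.sum_eq_zero
        intro i _
        have h1 := hXub i (x i)
        have h2 := hXlb i (x i)
        have h3 := hεs i
        have h4 := hεs0 i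
        linarith
      rw [hg0] at hx
      exact absurd hc0 (by linarith)
    have hε'pos : 0 < ε' := lt_of_le_of_ne hε' (Ne.symm hε'0)
    have hkpos : 0 < (k:ℝ) := by exact_mod_cast Nat.pos_of_ne_zero hk0
    have hLpos : 0 < L := by
      rw [hL]
      apply Real.log_pos
      rw [lt_div_iff₀ hγ0]; linarith
    set t : ℝ := Real.sqrt (2 * L * k) * ε' with htdef
    have ht0 : 0 < t := by
      apply mul_pos _ hε'pos
      apply Real.sqrt_pos.mpr
      positivity
    set s : ℝ := t / (k * ε' ^ 2) with hsdef
    have hs0 : 0 < s := div_pos ht0 (by positivity)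
    set m : Fin k → ℝ := fun i => ∫ x, φ i x * Real.log (φ i x) ∂(ν i) with hm
    have hIφ : ∀ i, Integrable (φ i) (ν i) := by
      intro i
      refine (integrable_const (Real.exp (εs i))).mono' (hφm i).aestronglyMeasurable
        (ae_of_all _ ?_)
      intro x
      rw [Real.norm_eq_abs, abs_of_pos (hφpos i x)]
      exact (hφmem i x).2
    have hφ1 : ∀ i, ∫ x, φ i x ∂(ν i) = 1 := by
      intro i
      have h := hφu i
      rw [withDensity_apply _ MeasurableSet.univ, Measure.restrict_univ,
        ← ofReal_integral_eq_lintegral_ofReal (hIφ i) (ae_of_all _ fun x => (hφpos i x).le)]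
        at h
      have := congrArg ENNReal.toReal h
      rwa [ENNReal.toReal_ofReal (integral_nonneg fun x => (hφpos i x).le),
        ENNReal.toReal_one] at this
    have hmb : ∀ i, m i ≤ ε' * (Real.exp ε' - 1) := by
      intro i
      have h := kl_bound (ν i) (hφm i) (hεs0 i) (hφmem i) (hφ1 i)
      refine h.trans ?_
      apply mul_le_mul (hεs i) (by simp [Real.exp_le_exp, hεs i]) _ hε'
      have := Real.one_le_exp (hεs0 i)
      linarith
    have hIX : ∀ i, Integrable (X i) (μt i) := by
      intro i
      refine (integrable_const ε').mono' (hXm i).aestronglyMeasurable (ae_of_all _ ?_)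
      intro x
      rw [Real.norm_eq_abs, abs_le]
      constructor
      · linarith [hXlb i x, hεs i]
      · linarith [hXub i x, hεs i]
    have hmean : ∀ i, ∫ x, X i x ∂(μt i) = m i := by
      intro i
      have hrw : ∫ x, X i x ∂(μt i)
          = ∫ x, ((φ i x).toNNReal : ℝ≥0) • X i x ∂(ν i) := by
        rw [hμt]
        exact integral_withDensity_eq_integral_smul (hφm i).real_toNNReal (X i)
      rw [hrw, hm]
      apply integral_congr_ae
      apply ae_of_all
      intro x
      simp only [NNReal.smul_def, smul_eq_mul]
      rw [Real.coe_toNNReal _ (hφpos i x).le]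
    -- per-coordinate mgf bound
    have hmgf : ∀ i, ∫ x, Real.exp (s * X i x) ∂(μt i)
        ≤ Real.exp (s * m i + s ^ 2 * ε' ^ 2 / 2) := by
      intro i
      have hY0 : ∫ x, (X i x - m i) ∂(μt i) = 0 := by
        rw [integral_sub (hIX i) (integrable_const _), hmean i, integral_const]
        simp
      have hYmem : ∀ x, X i x - m i ∈ Set.Icc (-ε' - m i) (ε' - m i) := by
        intro x
        constructor
        · have := hXlb i x; have := hεs i; simp; linarith
        · have := hXub i x; have := hεs i; simp; linarith
      have hh := hoeffding_lemma (μt i) ((hXm i).sub measurable_const) hYmem hY0 s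
      have harg : s ^ 2 * ((ε' - m i) - (-ε' - m i)) ^ 2 / 8 = s ^ 2 * ε' ^ 2 / 2 := by ring
      rw [harg] at hh
      have hsplit : ∀ x, Real.exp (s * X i x)
          = Real.exp (s * (X i x - m i)) * Real.exp (s * m i) := by
        intro x
        rw [← Real.exp_add]; ring_nf
      calc ∫ x, Real.exp (s * X i x) ∂(μt i)
          = ∫ x, Real.exp (s * (X i x - m i)) * Real.exp (s * m i) ∂(μt i) := by
            exact integral_congr_ae (ae_of_all _ hsplit)
        _ = (∫ x, Real.exp (s * (X i x - m i)) ∂(μt i)) * Real.exp (s * m i) :=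
            integral_mul_const _ _
        _ ≤ Real.exp (s ^ 2 * ε' ^ 2 / 2) * Real.exp (s * m i) :=
            mul_le_mul_of_nonneg_right hh (Real.exp_nonneg _)
        _ = Real.exp (s * m i + s ^ 2 * ε' ^ 2 / 2) := by
            rw [← Real.exp_add]; ring_nf
    -- Chernoff bound on the product
    have hgub : ∀ x, g x ≤ k * ε' := by
      intro x
      rw [hg]
      calc ∑ i, X i (x i) ≤ ∑ _i : Fin k, ε' :=
        Finset.sum_le_sum fun i _ => (hXub i (x i)).trans (hεs i)
      _ = k * ε' := by simp [mul_comm]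
    have hIexp : Integrable (fun x => Real.exp (s * (g x - c))) (Measure.pi μt) := by
      refine (integrable_const (Real.exp (s * (k * ε' - c)))).mono'
        ((Real.measurable_exp.comp ((hgm.sub measurable_const).const_mul s)).aestronglyMeasurable)
        (ae_of_all _ ?_)
      intro x
      rw [Real.norm_eq_abs, Real.abs_exp, Real.exp_le_exp]
      have := hgub x
      nlinarith
    have hind : (Measure.pi μt Sᶜ).toReal ≤ ∫ x, Real.exp (s * (g x - c)) ∂(Measure.pi μt) := by
      rw [← measureReal_def, ← integral_indicator_one hSm.compl]
      apply integral_mono ((integrable_const (1:ℝ)).indicator hSm.compl) hIexp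
      intro x
      by_cases hx : x ∈ Sᶜ
      · rw [Set.indicator_of_mem hx]
        simp only [Pi.one_apply]
        apply Real.one_le_exp
        have hxc : c < g x := by
          simp only [hSdef, Set.mem_compl_iff, Set.mem_setOf_eq, not_le] at hx
          exact hx
        nlinarith
      · rw [Set.indicator_of_notMem hx]
        exact Real.exp_nonneg _
    have hsplit2 : ∫ x, Real.exp (s * (g x - c)) ∂(Measure.pi μt)
        = (∫ x, Real.exp (s * g x) ∂(Measure.pi μt)) * Real.exp (-(s * c)) := by
      rw [← integral_mul_const]
      apply integral_congr_ae (ae_of_all _ _)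
      intro x
      rw [← Real.exp_add]; ring_nf
    have hfact : ∫ x, Real.exp (s * g x) ∂(Measure.pi μt)
        = ∏ i, ∫ t', Real.exp (s * X i t') ∂(μt i) := by
      rw [← integral_pi_prod μt (fun i t' => Real.exp (s * X i t'))]
      apply integral_congr_ae (ae_of_all _ _)
      intro x
      rw [hg, Finset.mul_sum, Real.exp_sum]
    have hprodb : ∏ i, ∫ t', Real.exp (s * X i t') ∂(μt i)
        ≤ ∏ i, Real.exp (s * m i + s ^ 2 * ε' ^ 2 / 2) := by
      apply Finset.prod_le_prod
      · intro i _
        exact integral_nonneg fun x => Real.exp_nonneg _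
      · intro i _
        exact hmgf i
    have hprodexp : ∏ i, Real.exp (s * m i + s ^ 2 * ε' ^ 2 / 2)
        = Real.exp (s * (∑ i, m i) + k * (s ^ 2 * ε' ^ 2 / 2)) := by
      rw [← Real.exp_sum]
      congr 1
      rw [Finset.sum_add_distrib, Finset.mul_sum]
      simp [mul_comm]
    have hsum_m : ∑ i, m i ≤ k * (ε' * (Real.exp ε' - 1)) := by
      calc ∑ i, m i ≤ ∑ _i : Fin k, ε' * (Real.exp ε' - 1) :=
        Finset.sum_le_sum fun i _ => hmb i
      _ = k * (ε' * (Real.exp ε' - 1)) := by simp [mul_comm]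
    have hfinal_exp : s * (∑ i, m i) + k * (s ^ 2 * ε' ^ 2 / 2) - s * c ≤ -L := by
      have hstep : s * (∑ i, m i) - s * c ≤ -(s * t) := by
        have h1 : (∑ i, m i) - c ≤ -t := by
          rw [hc]
          have : (k:ℝ) * ε' * (Real.exp ε' - 1) = k * (ε' * (Real.exp ε' - 1)) := by ring
          rw [this]
          rw [htdef]
          linarith
        nlinarith
      have hts : t ^ 2 = 2 * L * k * ε' ^ 2 := by
        rw [htdef, mul_pow, Real.sq_sqrt (by positivity)]
      have e1 : s * t = t ^ 2 / (k * ε' ^ 2) := by rw [hsdef]; ring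
      have e2 : (k:ℝ) * (s ^ 2 * ε' ^ 2 / 2) = t ^ 2 / (2 * (k * ε' ^ 2)) := by
        rw [hsdef]
        field_simp
      have e3 : -(s * t) + (k:ℝ) * (s ^ 2 * ε' ^ 2 / 2) = -L := by
        rw [e1, e2, hts]
        field_simp
        ring
      calc s * (∑ i, m i) + (k:ℝ) * (s ^ 2 * ε' ^ 2 / 2) - s * c
          = (s * (∑ i, m i) - s * c) + (k:ℝ) * (s ^ 2 * ε' ^ 2 / 2) := by ring
        _ ≤ -(s * t) + (k:ℝ) * (s ^ 2 * ε' ^ 2 / 2) := add_le_add_left hstep _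
        _ = -L := e3
    have hfin : (Measure.pi μt Sᶜ).toReal ≤ Real.exp (-L) := by
      calc (Measure.pi μt Sᶜ).toReal
          ≤ ∫ x, Real.exp (s * (g x - c)) ∂(Measure.pi μt) := hind
        _ = (∫ x, Real.exp (s * g x) ∂(Measure.pi μt)) * Real.exp (-(s * c)) := hsplit2
        _ = (∏ i, ∫ t', Real.exp (s * X i t') ∂(μt i)) * Real.exp (-(s * c)) := by
            rw [hfact]
        _ ≤ (∏ i, Real.exp (s * m i + s ^ 2 * ε' ^ 2 / 2)) * Real.exp (-(s * c)) :=
            mul_le_mul_of_nonneg_right hprodb (Real.exp_nonneg _)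
        _ = Real.exp (s * (∑ i, m i) + k * (s ^ 2 * ε' ^ 2 / 2) - s * c) := by
            rw [hprodexp, ← Real.exp_add]; ring_nf
        _ ≤ Real.exp (-L) := Real.exp_le_exp.mpr hfinal_exp
    refine hfin.trans ?_
    rw [hL, one_div, Real.log_inv, neg_neg, Real.exp_log hγ0]
  -- combine
  have htotal : Measure.pi μ E ≤ ENNReal.ofReal (Real.exp c) * Measure.pi ν E
      + ENNReal.ofReal γ + ENNReal.ofReal (∑ i, γs i) := by
    calc Measure.pi μ E ≤ Measure.pi μt E + ENNReal.ofReal (∑ i, γs i) := h1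
      _ ≤ (Measure.pi μt (E ∩ S) + Measure.pi μt Sᶜ) + ENNReal.ofReal (∑ i, γs i) :=
          add_le_add_left h2 _
      _ ≤ (ENNReal.ofReal (Real.exp c) * Measure.pi ν E + ENNReal.ofReal γ)
          + ENNReal.ofReal (∑ i, γs i) := add_le_add_left (add_le_add h3 h4) _
  have hne1 : ENNReal.ofReal (Real.exp c) * Measure.pi ν E ≠ ⊤ :=
    ENNReal.mul_ne_top ENNReal.ofReal_ne_top (measure_ne_top _ _)
  have hne2 : ENNReal.ofReal (Real.exp c) * Measure.pi ν E + ENNReal.ofReal γ ≠ ⊤ :=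
    ENNReal.add_ne_top.mpr ⟨hne1, ENNReal.ofReal_ne_top⟩
  have hne3 : ENNReal.ofReal (Real.exp c) * Measure.pi ν E + ENNReal.ofReal γ
      + ENNReal.ofReal (∑ i, γs i) ≠ ⊤ :=
    ENNReal.add_ne_top.mpr ⟨hne2, ENNReal.ofReal_ne_top⟩
  have := ENNReal.toReal_mono hne3 htotal
  rw [ENNReal.toReal_add hne2 ENNReal.ofReal_ne_top,
    ENNReal.toReal_add hne1 ENNReal.ofReal_ne_top, ENNReal.toReal_mul,
    ENNReal.toReal_ofReal (Real.exp_nonneg _), ENNReal.toReal_ofReal hγ0.le,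
    ENNReal.toReal_ofReal (Finset.sum_nonneg fun i _ => hγs0 i)] at this
  linarith

end AdvCompProof

open MeasureTheory
open scoped BigOperators

/-- A family of probability distributions `M` indexed by inputs `D ∈ T^n` is
`(ε,γ)`-differentially private if for all inputs differing in a single coordinate and
all measurable events `E`:
`exp(-ε)·M_{D'}(E) - γ ≤ M_D(E) ≤ exp(ε)·M_{D'}(E) + γ`. -/
def DiffPrivate {T : Type*} {n : ℕ} {O : Type*} [MeasurableSpace O]
    (ε γ : ℝ) (M : (Fin n → T) → Measure O) : Prop :=
  ∀ (D : Fin n → T) (i : Fin n) (t' : T) (E : Set O), MeasurableSet E →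
    Real.exp (-ε) * (M (Function.update D i t') E).toReal - γ ≤ (M D E).toReal ∧
    (M D E).toReal ≤ Real.exp ε * (M (Function.update D i t') E).toReal + γ

/-- **Advanced composition (Dwork–Rothblum–Vadhan).**  Let `M¹,…,M^k` be families of
probability distributions, each `M^i` being `(ε_i,γ_i)`-differentially private with
`ε_i ≤ ε'`.  Then for any `γ ∈ (0,1]`, the composed mechanism
`D ↦ (M¹_D, …, M^k_D)` (an independent tuple of samples from the `k` mechanisms on the
same input) is `(ε, γ + ∑ i, γ_i)`-differentially private for
`ε = √(2·log(1/γ)·k)·ε' + k·ε'·(e^{ε'} − 1)`. -/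
theorem diffPrivate_advanced_comp {T : Type*} {n k : ℕ}
    {O : Fin k → Type*} [∀ i, MeasurableSpace (O i)]
    (M : ∀ i : Fin k, (Fin n → T) → Measure (O i))
    (hprob : ∀ i D, IsProbabilityMeasure (M i D))
    (ε' : ℝ) (hε' : 0 ≤ ε')
    (εs γs : Fin k → ℝ) (hεs0 : ∀ i, 0 ≤ εs i) (hγs0 : ∀ i, 0 ≤ γs i)
    (hεs : ∀ i, εs i ≤ ε')
    (hDP : ∀ i, DiffPrivate (εs i) (γs i) (M i))
    (γ : ℝ) (hγ0 : 0 < γ) (hγ1 : γ ≤ 1) :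
    DiffPrivate (Real.sqrt (2 * Real.log (1 / γ) * k) * ε' + k * ε' * (Real.exp ε' - 1))
      (γ + ∑ i, γs i)
      (fun D => Measure.pi (fun i => M i D)) := by
  intro D i t' E hE
  haveI h1 : ∀ j, IsProbabilityMeasure (M j D) := fun j => hprob j D
  haveI h2 : ∀ j, IsProbabilityMeasure (M j (Function.update D i t')) := fun j => hprob j _
  have hDD' : Function.update (Function.update D i t') i (D i) = D := by
    rw [Function.update_idem, Function.update_eq_self]
  have hd' : ∀ (j : Fin k) (E' : Set (O j)), MeasurableSet E' →
      ((M j (Function.update D i t')) E').toReal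
        ≤ Real.exp (εs j) * ((M j D) E').toReal + γs j := by
    intro j E' hE'
    have := (hDP j (Function.update D i t') i (D i) E' hE').2
    rwa [hDD'] at this
  have hu' : ∀ (j : Fin k) (E' : Set (O j)), MeasurableSet E' →
      ((M j D) E').toReal
        ≤ Real.exp (εs j) * ((M j (Function.update D i t')) E').toReal + γs j :=
    fun j E' hE' => (hDP j D i t' E' hE').2
  have hupper := AdvCompProof.upper (fun j => M j D)
      (fun j => M j (Function.update D i t')) ε' hε' εs γs hεs0 hγs0 hεs
      hu' hd' γ hγ0 hγ1 E hE
  have hlower := AdvCompProof.upper (fun j => M j (Function.update D i t'))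
      (fun j => M j D) ε' hε' εs γs hεs0 hγs0 hεs
      hd' hu' γ hγ0 hγ1 E hE
  set c : ℝ := Real.sqrt (2 * Real.log (1 / γ) * k) * ε' + k * ε' * (Real.exp ε' - 1) with hc
  have hc0 : 0 ≤ c := by
    rw [hc]
    have hh1 : 0 ≤ Real.sqrt (2 * Real.log (1/γ) * k) * ε' :=
      mul_nonneg (Real.sqrt_nonneg _) hε'
    have hh2 : 0 ≤ (k:ℝ) * ε' * (Real.exp ε' - 1) := by
      apply mul_nonneg (mul_nonneg (Nat.cast_nonneg k) hε')
      have := Real.one_le_exp hε'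
      linarith
    linarith
  have hδ0 : 0 ≤ γ + ∑ j, γs j := by
    have := Finset.sum_nonneg (fun j (_ : j ∈ Finset.univ) => hγs0 j)
    linarith
  constructor
  · -- lower bound
    dsimp only
    have hm : Real.exp (-c) * ((Measure.pi fun j => M j (Function.update D i t')) E).toReal
        ≤ Real.exp (-c) * (Real.exp c * ((Measure.pi fun j => M j D) E).toReal
          + (γ + ∑ j, γs j)) :=
      mul_le_mul_of_nonneg_left hlower (Real.exp_nonneg _)
    have he : Real.exp (-c) * (Real.exp c * ((Measure.pi fun j => M j D) E).toReal
          + (γ + ∑ j, γs j))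
        = ((Measure.pi fun j => M j D) E).toReal + Real.exp (-c) * (γ + ∑ j, γs j) := by
      rw [mul_add, ← mul_assoc, ← Real.exp_add]
      simp
    have hee : Real.exp (-c) * (γ + ∑ j, γs j) ≤ γ + ∑ j, γs j := by
      have h3 : Real.exp (-c) ≤ 1 := by
        have := Real.exp_le_exp.mpr (neg_nonpos.mpr hc0)
        rwa [Real.exp_zero] at this
      exact mul_le_of_le_one_left hδ0 h3
    rw [he] at hm
    linarith
  · dsimp only
    exact hupper
end

section
/- Let f : T^n → ℝ have L¹ sensitivity s (for every t ∈ T^n, i ≤ n, and t' ∈ T: |f(t) − f(t', t_{−i})| ≤ s) and let ε > 0. Then the Laplace mechanism that, on input t, outputs f(t) + Z where Z is drawn from the Laplace distribution with density (ε/(2s))·exp(−ε|z|/s) on ℝ, is (ε, 0)-differentially private: for every pair of inputs t, t' differing in a single coordinate and every measurable event E ⊆ ℝ, M_t(E) ≤ exp(ε)·M_{t'}(E). -/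
open MeasureTheory

/-- The Laplace distribution on `ℝ` with scale `b`, given by density `(1/(2b))·exp(-|z|/b)`. -/
noncomputable def laplaceMeasure (b : ℝ) : Measure ℝ :=
  volume.withDensity fun z => ENNReal.ofReal ((1 / (2 * b)) * Real.exp (-|z| / b))

/-- The Laplace mechanism: on input `t`, output `f t + Z` with `Z` Laplace with scale `s/ε`,
i.e. with density `(ε/(2s))·exp(-ε|z|/s)`. -/
noncomputable def laplaceMech {T : Type*} {n : ℕ} (f : (Fin n → T) → ℝ) (s ε : ℝ)
    (t : Fin n → T) : Measure ℝ :=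
  Measure.map (fun z => f t + z) (laplaceMeasure (s / ε))

section Aux

open Set Real

lemma laplaceDensity_measurable (b : ℝ) :
    Measurable fun z : ℝ => ENNReal.ofReal ((1 / (2 * b)) * Real.exp (-|z| / b)) := by
  apply ENNReal.measurable_ofReal.comp
  fun_prop

lemma laplaceDensity_integrable {b : ℝ} (hb : 0 < b) :
    Integrable (fun z : ℝ => (1 / (2 * b)) * Real.exp (-|z| / b)) := by
  have h1 : IntegrableOn (fun z : ℝ => Real.exp (-|z| / b)) (Ioi 0) := by
    refine ((exp_neg_integrableOn_Ioi 0 (show (0:ℝ) < 1/b by positivity)).congr_fun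
      (fun x hx => ?_) measurableSet_Ioi)
    rw [abs_of_pos (show (0:ℝ) < x from hx)]
    ring_nf
  have h2 : IntegrableOn (fun z : ℝ => Real.exp (-|z| / b)) (Iic 0) := by
    rw [← Measure.map_neg_eq_self (volume : Measure ℝ)]
    have m : MeasurableEmbedding fun x : ℝ => -x :=
      (Homeomorph.neg ℝ).measurableEmbedding
    rw [m.integrableOn_map_iff]
    simp_rw [Function.comp_def, abs_neg, neg_preimage, neg_Iic, neg_zero]
    exact Iff.mpr integrableOn_Ici_iff_integrableOn_Ioi h1
  have : Integrable (fun z : ℝ => Real.exp (-|z| / b)) := by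
    rw [← integrableOn_univ, ← Iic_union_Ioi (a := (0:ℝ))]
    exact h2.union h1
  exact this.const_mul _

lemma laplaceMech_apply {T : Type*} {n : ℕ} (f : (Fin n → T) → ℝ) (s ε : ℝ)
    (t : Fin n → T) {E : Set ℝ} (hE : MeasurableSet E) :
    laplaceMech f s ε t E
      = ∫⁻ w in E, ENNReal.ofReal ((1 / (2 * (s/ε))) * Real.exp (-|w - f t| / (s/ε))) := by
  set b := s / ε with hb
  set g : ℝ → ENNReal := fun z => ENNReal.ofReal ((1 / (2 * b)) * Real.exp (-|z| / b)) with hg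
  have hpre : MeasurableSet ((fun z => f t + z) ⁻¹' E) :=
    hE.preimage (measurable_const_add (f t))
  rw [laplaceMech, Measure.map_apply (measurable_const_add (f t)) hE, laplaceMeasure,
    withDensity_apply _ hpre, ← lintegral_indicator hpre _]
  have key : ∀ z : ℝ, ((fun z => f t + z) ⁻¹' E).indicator g z
      = E.indicator (fun w => g (w - f t)) (f t + z) := by
    intro z
    by_cases h : f t + z ∈ E
    · rw [Set.indicator_of_mem (Set.mem_preimage.mpr h), Set.indicator_of_mem h,
        add_sub_cancel_left]
    · simp [Set.indicator_apply, Set.mem_preimage, h]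
  calc ∫⁻ z, ((fun z => f t + z) ⁻¹' E).indicator g z
      = ∫⁻ z, E.indicator (fun w => g (w - f t)) (f t + z) := lintegral_congr key
    _ = ∫⁻ w, E.indicator (fun w => g (w - f t)) w :=
        lintegral_add_left_eq_self (E.indicator fun w => g (w - f t)) (f t)
    _ = ∫⁻ w in E, g (w - f t) := lintegral_indicator hE _

end Aux

/-- **The Laplace mechanism is `(ε,0)`-differentially private.**  If `f : T^n → ℝ` has
L¹ sensitivity `s` and `ε > 0`, then for every pair of inputs differing in a single
coordinate and every measurable event `E ⊆ ℝ`,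
`M_t(E) ≤ exp(ε)·M_{t'}(E)`. -/
theorem laplaceMech_dp {T : Type*} {n : ℕ} (f : (Fin n → T) → ℝ) (s ε : ℝ)
    (hs : 0 < s) (hε : 0 < ε)
    (hsens : ∀ (t : Fin n → T) (i : Fin n) (t' : T),
      |f t - f (Function.update t i t')| ≤ s) :
    ∀ (t : Fin n → T) (i : Fin n) (t' : T) (E : Set ℝ), MeasurableSet E →
      (laplaceMech f s ε t E).toReal
        ≤ Real.exp ε * (laplaceMech f s ε (Function.update t i t') E).toReal := by
  intro t i t' E hE
  set b := s / ε with hbdef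
  have hb : 0 < b := div_pos hs hε
  set a := f t
  set a' := f (Function.update t i t')
  have hd : |a - a'| ≤ s := hsens t i t'
  have hc : 0 < 1 / (2 * b) := by positivity
  -- pointwise density inequality
  have hpt : ∀ w : ℝ, ENNReal.ofReal ((1 / (2 * b)) * Real.exp (-|w - a| / b))
      ≤ ENNReal.ofReal (Real.exp ε) *
        ENNReal.ofReal ((1 / (2 * b)) * Real.exp (-|w - a'| / b)) := by
    intro w
    rw [← ENNReal.ofReal_mul (Real.exp_nonneg ε)]
    apply ENNReal.ofReal_le_ofReal
    have h1 : |w - a'| - |w - a| ≤ s := by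
      have : |w - a'| ≤ |w - a| + |a - a'| := by
        calc |w - a'| = |(w - a) + (a - a')| := by ring_nf
          _ ≤ |w - a| + |a - a'| := abs_add_le _ _
      linarith
    have hsb : s = ε * b := by rw [hbdef]; field_simp
    have h3 : (|w - a'| - |w - a|) / b ≤ ε := by
      rw [div_le_iff₀ hb]; nlinarith
    have h2 : -|w - a| / b ≤ ε + -|w - a'| / b := by
      have e1 := neg_div b |w - a|
      have e2 := neg_div b (|w - a'|)
      have e3 := sub_div (|w - a'|) (|w - a|) b
      linarith
    calc (1 / (2 * b)) * Real.exp (-|w - a| / b)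
        ≤ (1 / (2 * b)) * (Real.exp ε * Real.exp (-|w - a'| / b)) := by
          apply mul_le_mul_of_nonneg_left _ hc.le
          rw [← Real.exp_add]
          exact Real.exp_le_exp.mpr h2
      _ = Real.exp ε * ((1 / (2 * b)) * Real.exp (-|w - a'| / b)) := by ring
  -- measure inequality in ℝ≥0∞
  have hmeas : Measurable fun w : ℝ =>
      ENNReal.ofReal ((1 / (2 * b)) * Real.exp (-|w - a'| / b)) := by
    apply ENNReal.measurable_ofReal.comp
    fun_prop
  have hmain : laplaceMech f s ε t E
      ≤ ENNReal.ofReal (Real.exp ε)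
        * laplaceMech f s ε (Function.update t i t') E := by
    rw [laplaceMech_apply f s ε t hE, laplaceMech_apply f s ε (Function.update t i t') hE,
      ← hbdef, ← lintegral_const_mul _ hmeas]
    exact lintegral_mono fun w => hpt w
  -- finiteness of the right-hand side
  have hfin : laplaceMech f s ε (Function.update t i t') E ≠ ⊤ := by
    rw [laplaceMech_apply f s ε (Function.update t i t') hE, ← hbdef]
    refine ne_of_lt (lt_of_le_of_lt (lintegral_mono' Measure.restrict_le_self le_rfl) ?_)
    have : (∫⁻ w : ℝ, ENNReal.ofReal ((1 / (2 * b)) * Real.exp (-|w - a'| / b)))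
        = ∫⁻ z : ℝ, ENNReal.ofReal ((1 / (2 * b)) * Real.exp (-|z| / b)) := by
      have := lintegral_add_right_eq_self (μ := volume)
        (fun z : ℝ => ENNReal.ofReal ((1 / (2 * b)) * Real.exp (-|z| / b))) (-a')
      simpa [sub_eq_add_neg] using this
    rw [this]
    exact (laplaceDensity_integrable hb).lintegral_lt_top
  calc (laplaceMech f s ε t E).toReal
      ≤ (ENNReal.ofReal (Real.exp ε) * laplaceMech f s ε (Function.update t i t') E).toReal :=
        ENNReal.toReal_mono (by simp [ENNReal.mul_ne_top, hfin]) hmain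
    _ = Real.exp ε * (laplaceMech f s ε (Function.update t i t') E).toReal := by
        rw [ENNReal.toReal_mul, ENNReal.toReal_ofReal (Real.exp_nonneg ε)]
end
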